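/- Let b ≥ 2 and k ≥ 1 be integers with B = b^k, let m ≥ 1 with gcd(m, b) = 1, and let s ≥ 1 satisfy gcd(s, b) = 1. Set ω = ord_{ms}(B) and n = Σ_{j=0}^{s−1} B^{jω}. If ℓ is a positive divisor of k, then s_{b^ℓ}(n) = s, and consequently n is b^ℓ-Niven. -/
import Mathlib

lemma sum_digits_mul_pow (c : ℕ) (hc : 2 ≤ c) (e n : ℕ) :
    (Nat.digits c (c ^ e * n)).sum = (Nat.digits c n).sum := by
  induction e with
  | zero => simp
  | succ e ih =>
    rcases Nat.eq_zero_or_pos n with rfl | hn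
    · simp
    · have h1 : (1:ℕ) < c := hc
      have hre : c ^ (e+1) * n = c * (c ^ e * n) := by ring
      have hpos : 0 < c * (c ^ e * n) := by positivity
      rw [hre, Nat.digits_def' h1 hpos]
      simp [Nat.mul_div_cancel_left _ (by omega : 0 < c), Nat.mul_mod_right, ih]

lemma aux_sum (c d : ℕ) (hc : 2 ≤ c) (hd : 1 ≤ d) (s : ℕ) :
    (Nat.digits c (∑ j ∈ Finset.range s, c ^ (j * d))).sum = s := by
  induction s with
  | zero => simp
  | succ s ih =>
    have hcd : c ^ d = c * c ^ (d-1) := by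
      rw [← pow_succ']; congr 1; omega
    have hstep : ∑ j ∈ Finset.range (s+1), c ^ (j*d)
        = 1 + c * (c ^ (d-1) * ∑ j ∈ Finset.range s, c ^ (j*d)) := by
      rw [Finset.sum_range_succ']
      simp_rw [add_mul, one_mul, pow_add]
      rw [← Finset.sum_mul, hcd]
      ring
    have h1 : (1:ℕ) < c := hc
    rw [hstep, Nat.digits_def' h1 (by positivity)]
    have hmod : (1 + c * (c ^ (d-1) * ∑ j ∈ Finset.range s, c ^ (j*d))) % c = 1 := by
      rw [Nat.add_mul_mod_self_left, Nat.mod_eq_of_lt h1]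
    have hdiv : (1 + c * (c ^ (d-1) * ∑ j ∈ Finset.range s, c ^ (j*d))) / c
        = c ^ (d-1) * ∑ j ∈ Finset.range s, c ^ (j*d) := by
      rw [mul_comm c, Nat.add_mul_div_right _ _ (by omega : 0 < c),
        Nat.div_eq_of_lt h1, Nat.zero_add]
    rw [hmod, hdiv]
    simp only [List.sum_cons, sum_digits_mul_pow c hc, ih]
    omega

/-- With `ω = ord_{ms}(b^k)` and `n = Σ_{j<s} (b^k)^{jω}`, if `ℓ` is a positive
divisor of `k` then `s_{b^ℓ}(n) = s` and `n` is `b^ℓ`-Niven. -/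
theorem stmt_14 (b k m s ℓ : ℕ) (hb : 2 ≤ b) (hk : 1 ≤ k) (hm : 1 ≤ m)
    (hgcd : Nat.gcd m b = 1) (hs : 1 ≤ s) (hsb : Nat.gcd s b = 1)
    (hℓ : 1 ≤ ℓ) (hℓk : ℓ ∣ k)
    (ω : ℕ) (hω : ω = orderOf ((b ^ k : ℕ) : ZMod (m * s)))
    (n : ℕ) (hn : n = ∑ j ∈ Finset.range s, (b ^ k) ^ (j * ω)) :
    (Nat.digits (b ^ ℓ) n).sum = s ∧ (Nat.digits (b ^ ℓ) n).sum ∣ n := by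
  obtain ⟨q, hq⟩ := hℓk
  have hq1 : 1 ≤ q := by
    rcases Nat.eq_zero_or_pos q with rfl | h
    · omega
    · exact h
  -- ω is positive
  haveI : NeZero (m*s) := ⟨Nat.mul_ne_zero (by omega) (by omega)⟩
  have hco : Nat.Coprime (b^k) (m*s) :=
    Nat.Coprime.pow_left k (Nat.Coprime.mul_right (Nat.Coprime.symm hgcd) (Nat.Coprime.symm hsb))
  have hunit : IsUnit ((b^k : ℕ) : ZMod (m*s)) := (ZMod.isUnit_iff_coprime _ _).mpr hco
  obtain ⟨u, hu⟩ := hunit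
  have hωpos : 0 < ω := by
    rw [hω, ← hu, orderOf_units]
    exact orderOf_pos u
  have hc2 : 2 ≤ b ^ ℓ := le_trans hb (Nat.le_self_pow (by omega) b)
  have hterm : ∀ j, (b^k)^(j*ω) = (b^ℓ)^(j*(q*ω)) := by
    intro j
    rw [← pow_mul, ← pow_mul]
    congr 1
    rw [hq]
    ring
  have hds : (Nat.digits (b^ℓ) n).sum = s := by
    rw [hn]
    simp_rw [hterm]
    exact aux_sum (b^ℓ) (q*ω) hc2 (Nat.mul_pos hq1 hωpos) s
  refine ⟨hds, ?_⟩
  rw [hds]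
  -- s ∣ n
  haveI : NeZero s := ⟨by omega⟩
  have h1 : ((b : ZMod s)^k)^ω = 1 := by
    have h := pow_orderOf_eq_one ((b^k : ℕ) : ZMod (m*s))
    rw [← hω] at h
    have h2 := congrArg (ZMod.castHom (dvd_mul_left s m) (ZMod s)) h
    rw [map_pow, map_natCast, map_one] at h2
    push_cast at h2
    exact h2
  have hzero : (n : ZMod s) = 0 := by
    rw [hn]
    push_cast
    rw [Finset.sum_congr rfl fun j _ => by rw [mul_comm j ω, pow_mul, h1, one_pow]]
    simp
  exact (ZMod.natCast_eq_zero_iff n s).mp hzero
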